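/- Let m ≥ 1, τ > 0, let p be a real number with 1 < p < 2, and let z ∈ ℝ^m with z ≠ 0. Let ᾱ be the unique solution in (0, |z|) of α + τ p α^{p−1} = |z|. Then inf over y ∈ ℝ^m of (|y|^p + |z − y|²/(2τ)) = (|z| − ᾱ) · (2ᾱ + p(|z| − ᾱ)) / (2τp). -/

import Mathlib

/-- For `1 < p < 2`, `τ > 0` and `z ≠ 0`, with `ᾱ` the unique solution in
`(0, |z|)` of `α + τ p α^{p−1} = |z|`, the Moreau envelope of `y ↦ |y|^p` satisfies
`inf_y (|y|^p + |z−y|²/(2τ)) = (|z| − ᾱ)(2ᾱ + p(|z| − ᾱ))/(2τp)`. -/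
theorem moreau_envelope_rpow_norm (m : ℕ) (hm : 1 ≤ m) (τ p : ℝ)
    (hτ : 0 < τ) (hp1 : 1 < p) (hp2 : p < 2)
    (z : EuclideanSpace ℝ (Fin m)) (hz : z ≠ 0)
    (α : ℝ) (hα0 : 0 < α) (hαz : α < ‖z‖)
    (hαeq : α + τ * p * α ^ (p - 1) = ‖z‖) :
    sInf (Set.range fun y : EuclideanSpace ℝ (Fin m) => ‖y‖ ^ p + ‖z - y‖ ^ 2 / (2 * τ))
      = (‖z‖ - α) * (2 * α + p * (‖z‖ - α)) / (2 * τ * p) := by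
  set R := ‖z‖ with hR
  have hR0 : 0 < R := norm_pos_iff.mpr hz
  have hp0 : 0 < p := by linarith
  have hαp : α ^ p = α * α ^ (p - 1) := by
    rw [show p = 1 + (p - 1) by ring, Real.rpow_add hα0, Real.rpow_one]
    ring_nf
  -- the tangent inequality: for t ≥ 0, α^p + p*α^(p-1)*(t-α) ≤ t^p
  have key : ∀ t : ℝ, 0 ≤ t → α ^ p + p * α ^ (p - 1) * (t - α) ≤ t ^ p := by
    intro t ht
    have hs : -1 ≤ (t - α) / α := by
      rw [le_div_iff₀ hα0]; linarith
    have hB := one_add_mul_self_le_rpow_one_add hs hp1.le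
    have h1 : (1 + (t - α) / α) = t / α := by field_simp; ring
    rw [h1] at hB
    have h2 : (t / α) ^ p = t ^ p / α ^ p := Real.div_rpow ht hα0.le p
    rw [h2] at hB
    have hαppos : (0:ℝ) < α ^ p := Real.rpow_pos_of_pos hα0 p
    have hB2 := mul_le_mul_of_nonneg_left hB hαppos.le
    calc α ^ p + p * α ^ (p - 1) * (t - α)
        = α ^ p * (1 + p * ((t - α) / α)) := by rw [hαp]; field_simp
      _ ≤ α ^ p * (t ^ p / α ^ p) := hB2
      _ = t ^ p := by field_simp
  -- value at minimizer
  have hτp : τ * p * α ^ (p - 1) = R - α := by linarith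
  have hval : α ^ p + (R - α) ^ 2 / (2 * τ) = (R - α) * (2 * α + p * (R - α)) / (2 * τ * p) := by
    rw [hαp, ← hτp]
    have hap : (0:ℝ) < α ^ (p-1) := Real.rpow_pos_of_pos hα0 _
    field_simp
  -- lower bound for every y
  have hlb : ∀ y : EuclideanSpace ℝ (Fin m),
      (R - α) * (2 * α + p * (R - α)) / (2 * τ * p) ≤ ‖y‖ ^ p + ‖z - y‖ ^ 2 / (2 * τ) := by
    intro y
    rw [← hval]
    set t := ‖y‖
    have ht : 0 ≤ t := norm_nonneg y
    have hs : 0 ≤ ‖z - y‖ := norm_nonneg _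
    have htri1 : R ≤ t + ‖z - y‖ := by
      calc R = ‖y + (z - y)‖ := by rw [hR, add_sub_cancel]
        _ ≤ t + ‖z - y‖ := norm_add_le _ _
    have htri2 : t ≤ R + ‖z - y‖ := by
      calc t = ‖z - (z - y)‖ := by rw [sub_sub_cancel]
        _ ≤ R + ‖z - y‖ := norm_sub_le _ _
    have hsq : (R - t) ^ 2 ≤ ‖z - y‖ ^ 2 := by nlinarith
    have hk := key t ht
    have hsub : p * α ^ (p - 1) = (R - α) / τ := by
      field_simp at hτp ⊢; linarith [hτp]
    rw [hsub] at hk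
    have expand : α ^ p + (R - α) ^ 2 / (2 * τ) + (t - α) ^ 2 / (2 * τ)
        = α ^ p + (R - α) / τ * (t - α) + (R - t) ^ 2 / (2 * τ) := by
      field_simp; ring
    have hdiv : (R - t) ^ 2 / (2 * τ) ≤ ‖z - y‖ ^ 2 / (2 * τ) := by gcongr
    have hnn : 0 ≤ (t - α) ^ 2 / (2 * τ) := by positivity
    linarith [hk, hdiv, expand, hnn]
  -- attainment at y₀ = (α/R) • z
  have hAtt : ∃ y : EuclideanSpace ℝ (Fin m),
      ‖y‖ ^ p + ‖z - y‖ ^ 2 / (2 * τ) = (R - α) * (2 * α + p * (R - α)) / (2 * τ * p) := by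
    refine ⟨(α / R) • z, ?_⟩
    have h1 : ‖(α / R) • z‖ = α := by
      rw [norm_smul, Real.norm_eq_abs, abs_of_pos (by positivity : (0:ℝ) < α / R)]
      field_simp
      exact hR.symm
    have h2 : ‖z - (α / R) • z‖ = R - α := by
      have hcoef : (R - α) / R = 1 - α / R := by field_simp
      have hz' : z - (α / R) • z = ((R - α) / R) • z := by
        rw [hcoef, sub_smul, one_smul]
      rw [hz', norm_smul, Real.norm_eq_abs,
        abs_of_pos (div_pos (by linarith) hR0)]
      field_simp
      rw [← hR]; ring
    rw [h1, h2, ← hval]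
  obtain ⟨y₀, hy₀⟩ := hAtt
  apply le_antisymm
  · exact csInf_le ⟨_, by rintro x ⟨y, rfl⟩; exact hlb y⟩ ⟨y₀, hy₀⟩
  · exact le_csInf ⟨_, ⟨y₀, rfl⟩⟩ (by rintro x ⟨y, rfl⟩; exact hlb y)
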